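/- arXiv:1307.7667 — 6 statements merged into one kernel-verified Lean document; each statement's English description precedes it below -/
import Mathlib

section
/- Let H be a finite set of hypotheses, F ⊆ H the set of false hypotheses, and N a set of sample sizes. Suppose ρ maps (R, A, n) with R, A ⊆ H disjoint and n ∈ N to a subset of H \ (R ∪ A), and define R₀ = ∅ and R_{i+1} = R_i ∪ ρ(R_i, A_i, n_{i+1}) where A_i ⊆ H satisfy A_i ∩ R_i = ∅, and n_{i+1} ∈ N is arbitrary (with ρ(R, A, ∞) = ∅). If (1) for all R ⊆ R' ⊆ H, A with A ∩ R = ∅, and n ∈ N we have ρ(R, A, n) ⊆ ρ(R', ∅, n) ∪ R', and (2) ρ(F, ∅, n) ⊆ F for all n ∈ N, then R_i ⊆ F for every i ≥ 0. -/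
open Finset

/-- Deterministic core of the rejection principle: if the rejection function is
monotone and never rejects outside the false hypotheses `F` when fed `F`, then
every iterate `R i` of the procedure is contained in `F`. -/
theorem rejection_principle_pathwise
    {H : Type*} [Fintype H] [DecidableEq H]
    (N : Set ℕ∞) (hN : ⊤ ∉ N) (F : Finset H)
    (ρ : Finset H → Finset H → ℕ∞ → Finset H)
    (hdom : ∀ R A n, Disjoint (ρ R A n) (R ∪ A))
    (htop : ∀ R A, ρ R A ⊤ = ∅)
    (A : ℕ → Finset H) (n : ℕ → ℕ∞) (R : ℕ → Finset H)
    (hn : ∀ i, n (i + 1) ∈ N ∨ n (i + 1) = ⊤)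
    (hR0 : R 0 = ∅)
    (hRstep : ∀ i, R (i + 1) = R i ∪ ρ (R i) (A i) (n (i + 1)))
    (hA : ∀ i, Disjoint (A i) (R i))
    (mono : ∀ (R' R'' A' : Finset H), R' ⊆ R'' → Disjoint A' R' →
      ∀ m ∈ N, ρ R' A' m ⊆ ρ R'' ∅ m ∪ R'')
    (hF : ∀ m ∈ N, ρ F ∅ m ⊆ F) :
    ∀ i, R i ⊆ F := by
  intro i
  induction i with
  | zero => simp [hR0]
  | succ i ih =>
    rw [hRstep i]
    rcases hn i with h | h
    · refine union_subset ih ?_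
      calc ρ (R i) (A i) (n (i + 1)) ⊆ ρ F ∅ (n (i + 1)) ∪ F :=
            mono (R i) F (A i) ih (hA i) _ h
        _ ⊆ F := union_subset (hF _ h) Subset.rfl
    · rw [h, htop]
      simpa using ih
end

section
/- If for each j = 1, ..., k and each s = 1, ..., k, the sequential test statistic T_n^{(j)} satisfies P_{θ^{(j)}}(T_n^{(j)} ≥ B_s^{(j)} for some n ∈ N) ≤ α/(k − s + 1) for all θ^{(j)} ∈ H^{(j)}, then the Bartroff–Lai sequential step-down procedure (which at each stage rejects active hypotheses whose standardized statistics are at least k minus the number of previously rejected hypotheses) has FWER(θ) ≤ α for all θ ∈ Θ. -/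
open MeasureTheory Finset
open scoped ENNReal

/-- Corollary 3.1: FWER control of the Bartroff–Lai sequential step-down
procedure. If each sequential statistic marginally satisfies
`P_θ(T_n^{(j)} ≥ B_s^{(j)} for some n ∈ N) ≤ α/(k−s+1)` under the null,
then the procedure whose rejection function is
`ρ(R,A,n) = {j ∉ R ∪ A : φ_j(T_n^{(j)}) ≥ k − |R|}` satisfies
`FWER(θ) ≤ α` for all `θ`. -/
theorem stepdown_FWER_control
    {Ω ϑ ι : Type*} [MeasurableSpace Ω] [Fintype ι] [DecidableEq ι]
    (P : ϑ → Measure Ω) [∀ θ, IsProbabilityMeasure (P θ)]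
    (Hyp : ι → Set ϑ) (N : Set ℕ) (α : ℝ≥0∞)
    (T : Ω → ℕ → ι → ℝ) (Bcrit : ι → ℕ → ℝ) (φ : ι → ℝ → ℝ)
    (k : ℕ) (hk : k = Fintype.card ι)
    (hφmono : ∀ j, StrictMono (φ j))
    (hφB : ∀ j s, 1 ≤ s → s ≤ k → φ j (Bcrit j s) = (k : ℝ) - s + 1)
    (herr : ∀ j θ, θ ∈ Hyp j → ∀ s, 1 ≤ s → s ≤ k →
      P θ {ω | ∃ n ∈ N, Bcrit j s ≤ T ω n j} ≤ α / ((k - s + 1 : ℕ) : ℝ≥0∞))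
    (ρ : Ω → Finset ι → Finset ι → ℕ → Finset ι)
    (hρ : ∀ ω R A n j, j ∈ ρ ω R A n ↔
      j ∉ R ∧ j ∉ A ∧ (k : ℝ) - R.card ≤ φ j (T ω n j))
    (R A : Ω → ℕ → Finset ι)
    (hR0 : ∀ ω, R ω 0 = ∅)
    (hA : ∀ ω i, Disjoint (A ω i) (R ω i))
    (hRstep : ∀ ω i, R ω (i + 1) = R ω i ∨
      ∃ m ∈ N, R ω (i + 1) = R ω i ∪ ρ ω (R ω i) (A ω i) m) :
    ∀ θ, P θ {ω | ∃ j ∈ R ω k, θ ∈ Hyp j} ≤ α := by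
  intro θ
  classical
  set Tset : Finset ι := Finset.univ.filter (fun j => θ ∈ Hyp j) with hTset
  by_cases hT : Tset = ∅
  · have hempty : {ω | ∃ j ∈ R ω k, θ ∈ Hyp j} = ∅ := by
      ext ω
      simp only [Set.mem_setOf_eq, Set.mem_empty_iff_false, iff_false]
      rintro ⟨j, hjR, hjT⟩
      have : j ∈ Tset := by simp [hTset, hjT]
      simp [hT] at this
    simp [hempty]
  set t := Tset.card with htdef
  have ht1 : 1 ≤ t := Finset.card_pos.mpr (Finset.nonempty_of_ne_empty hT)
  have htk : t ≤ k := by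
    rw [htdef, hk]
    simpa using Finset.card_le_univ Tset
  set s := k - t + 1 with hsdef
  have hs1 : 1 ≤ s := Nat.le_add_left 1 _
  have hsk : s ≤ k := by omega
  have hks : k - s + 1 = t := by omega
  -- inclusion of the FWER event in the union of marginal crossing events
  have hsub : {ω | ∃ j ∈ R ω k, θ ∈ Hyp j} ⊆
      ⋃ j ∈ Tset, {ω | ∃ n ∈ N, Bcrit j s ≤ T ω n j} := by
    intro ω hω
    obtain ⟨j0, hj0R, hj0T⟩ := hω
    have hex : ∃ i, ∃ j ∈ R ω i, θ ∈ Hyp j := ⟨k, j0, hj0R, hj0T⟩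
    obtain ⟨j, hjR, hjT⟩ := Nat.find_spec hex
    have hi0 : Nat.find hex ≠ 0 := by
      intro h
      rw [h, hR0] at hjR
      exact absurd hjR (Finset.notMem_empty j)
    obtain ⟨i', hi'⟩ : ∃ i', Nat.find hex = i' + 1 := ⟨Nat.find hex - 1, by omega⟩
    rw [hi'] at hjR
    have hnot : ¬ ∃ j ∈ R ω i', θ ∈ Hyp j := Nat.find_min hex (by omega)
    rcases hRstep ω i' with heq | ⟨m, hmN, heq⟩
    · exact absurd ⟨j, heq ▸ hjR, hjT⟩ hnot
    · rw [heq, Finset.mem_union] at hjR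
      have hjρ : j ∈ ρ ω (R ω i') (A ω i') m := by
        rcases hjR with h | h
        · exact absurd ⟨j, h, hjT⟩ hnot
        · exact h
      obtain ⟨hjnR, hjnA, hφge⟩ := (hρ ω (R ω i') (A ω i') m j).mp hjρ
      -- R ω i' contains no true hypotheses, so it is disjoint from Tset
      have hdisj : Disjoint (R ω i') Tset := by
        rw [Finset.disjoint_left]
        intro x hxR hxT
        have hxT' : θ ∈ Hyp x := (Finset.mem_filter.mp hxT).2
        exact hnot ⟨x, hxR, hxT'⟩
      have hcard : (R ω i').card + t ≤ k := by
        have h1 : (R ω i' ∪ Tset).card ≤ k := by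
          rw [hk]
          simpa using Finset.card_le_univ (R ω i' ∪ Tset)
        rw [Finset.card_union_of_disjoint hdisj] at h1
        exact h1
      have htle : (t : ℝ) ≤ (k : ℝ) - (R ω i').card := by
        have : ((R ω i').card : ℝ) + t ≤ k := by exact_mod_cast hcard
        linarith
      have hφle : φ j (Bcrit j s) ≤ φ j (T ω m j) := by
        rw [hφB j s hs1 hsk]
        have hst : (k : ℝ) - s + 1 = (t : ℝ) := by
          rw [← hks]
          push_cast [Nat.cast_sub hsk]
          ring
        rw [hst]
        linarith
      have hBle : Bcrit j s ≤ T ω m j := (hφmono j).le_iff_le.mp hφle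
      have hjT' : j ∈ Tset := by simp [hTset, hjT]
      exact Set.mem_biUnion hjT' ⟨m, hmN, hBle⟩
  calc P θ {ω | ∃ j ∈ R ω k, θ ∈ Hyp j}
      ≤ P θ (⋃ j ∈ Tset, {ω | ∃ n ∈ N, Bcrit j s ≤ T ω n j}) := measure_mono hsub
    _ ≤ ∑ j ∈ Tset, P θ {ω | ∃ n ∈ N, Bcrit j s ≤ T ω n j} :=
        measure_biUnion_finset_le _ _
    _ ≤ ∑ _j ∈ Tset, α / ((k - s + 1 : ℕ) : ℝ≥0∞) := by
        refine Finset.sum_le_sum fun j hj => ?_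
        exact herr j θ ((Finset.mem_filter.mp hj).2) s hs1 hsk
    _ = (t : ℝ≥0∞) * (α / (t : ℝ≥0∞)) := by
        rw [Finset.sum_const, hks, ← htdef, nsmul_eq_mul]
    _ ≤ α := by
        rw [mul_comm]
        rw [ENNReal.div_mul_cancel (Nat.cast_ne_zero.mpr (by omega))
          (ENNReal.natCast_ne_top t)]
end

section
/- Let H₁, ..., H_s be a sequentially exclusive partition of H, i.e., for each i, if all hypotheses in ⋃_{i'<i} H_{i'} are false then H_i contains at most one true hypothesis. Suppose at least one hypothesis is true, let ℓ* = min{ℓ : H_ℓ contains a true hypothesis}, and suppose all hypotheses in ⋃_{ℓ<ℓ*} H_ℓ are false. Then H_{ℓ*} contains exactly one true hypothesis H^{(j*)}; moreover, for any n, if a true hypothesis H^{(j)} belongs to ρ(F, ∅, n) = {H^{(j)} ∉ F : T_n^{(j)} ≥ B^{(j)} and H_ℓ ⊆ F for all ℓ < i_j}, then j = j*. -/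
open Finset

/-- Key combinatorial step for testing in order: under sequential exclusivity,
if `ℓ*` is the smallest block index containing a true hypothesis and all
hypotheses in earlier blocks are false, then the block `ℓ*` contains exactly
one true hypothesis `j*`, and any true hypothesis belonging to `ρ(F,∅,n)`
must equal `j*`. Here `F` is the (finite) set of false hypotheses. -/
theorem inorder_unique_true_at_risk
    {H : Type*} [Fintype H] [DecidableEq H]
    (s : ℕ) (idx : H → ℕ) (hidx : ∀ j, idx j ∈ Set.Icc 1 s)
    (F : Finset H)
    (hexc : ∀ i, (∀ j, idx j < i → j ∈ F) →
      ∀ j j', j ∉ F → j' ∉ F → idx j = i → idx j' = i → j = j')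
    (hsome : ∃ j, j ∉ F)
    (ℓstar : ℕ)
    (hℓex : ∃ j, j ∉ F ∧ idx j = ℓstar)
    (hℓmin : ∀ j, j ∉ F → ℓstar ≤ idx j)
    (hearlier : ∀ j, idx j < ℓstar → j ∈ F)
    (T : ℕ → H → ℝ) (B : H → ℝ) :
    ∃ jstar, (jstar ∉ F ∧ idx jstar = ℓstar) ∧
      (∀ j, j ∉ F → idx j = ℓstar → j = jstar) ∧
      ∀ (n : ℕ) (j : H), j ∉ F → B j ≤ T n j →
        (∀ j', idx j' < idx j → j' ∈ F) → j = jstar := by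
  obtain ⟨jstar, hjF, hjidx⟩ := hℓex
  refine ⟨jstar, ⟨hjF, hjidx⟩, fun j hj hji => hexc ℓstar hearlier j jstar hj hjF hji hjidx,
    fun n j hj _ hall => ?_⟩
  have h1 : ℓstar ≤ idx j := hℓmin j hj
  have h2 : idx j = ℓstar := by
    by_contra h
    exact hjF (hall jstar (by omega))
  exact hexc ℓstar hearlier j jstar hj hjF h2 hjidx
end

section
/- If H₁, ..., H_s is a sequentially exclusive partition of H and for each j, P_{θ^{(j)}}(T_n^{(j)} ≥ B^{(j)} for some n ∈ N) ≤ α whenever θ^{(j)} ∈ H^{(j)}, then the sequential procedure that rejects H^{(j)} at sample size n if T_n^{(j)} ≥ B^{(j)} and all hypotheses in all earlier partition blocks have been rejected, controls the familywise error rate at level α: FWER(θ) ≤ α for all θ ∈ Θ. -/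
open MeasureTheory Finset
open scoped ENNReal

/-- Corollary 3.2: FWER control of the sequential procedure for testing
hypotheses in order. If the partition (given by block indices `idx`) is
sequentially exclusive and each statistic marginally satisfies
`P_θ(T_n^{(j)} ≥ B^{(j)} for some n ∈ N) ≤ α` under the null, then the
procedure that rejects `H^{(j)}` at sample size `n` when `T_n^{(j)} ≥ B^{(j)}`
and all hypotheses in earlier blocks have been rejected controls the FWER at
level `α`. -/
theorem inorder_FWER_control
    {Ω ϑ ι : Type*} [MeasurableSpace Ω] [Fintype ι] [DecidableEq ι]
    (P : ϑ → Measure Ω) [∀ θ, IsProbabilityMeasure (P θ)]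
    (Hyp : ι → Set ϑ) (N : Set ℕ) (α : ℝ≥0∞)
    (s : ℕ) (idx : ι → ℕ) (hidx : ∀ j, idx j ∈ Set.Icc 1 s)
    (hexc : ∀ (θ : ϑ) (i : ℕ), (∀ j, idx j < i → θ ∉ Hyp j) →
      ∀ j j', idx j = i → idx j' = i → θ ∈ Hyp j → θ ∈ Hyp j' → j = j')
    (T : Ω → ℕ → ι → ℝ) (B : ι → ℝ) (k : ℕ) (hk : k = Fintype.card ι)
    (herr : ∀ j θ, θ ∈ Hyp j →
      P θ {ω | ∃ n ∈ N, B j ≤ T ω n j} ≤ α)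
    (ρ : Ω → Finset ι → Finset ι → ℕ → Finset ι)
    (hρ : ∀ ω R A n j, j ∈ ρ ω R A n ↔
      j ∉ R ∧ j ∉ A ∧ B j ≤ T ω n j ∧ ∀ j', idx j' < idx j → j' ∈ R)
    (R A : Ω → ℕ → Finset ι)
    (hR0 : ∀ ω, R ω 0 = ∅)
    (hA : ∀ ω i, Disjoint (A ω i) (R ω i))
    (hRstep : ∀ ω i, R ω (i + 1) = R ω i ∨
      ∃ m ∈ N, R ω (i + 1) = R ω i ∪ ρ ω (R ω i) (A ω i) m) :
    ∀ θ, P θ {ω | ∃ j ∈ R ω k, θ ∈ Hyp j} ≤ α := by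
  intro θ
  classical
  -- key structural claim about R
  have claim : ∀ ω n j, j ∈ R ω n →
      (∃ m ∈ N, B j ≤ T ω m j) ∧ (∀ j', idx j' < idx j → j' ∈ R ω n) := by
    intro ω n
    induction n with
    | zero => intro j hj; rw [hR0] at hj; exact absurd hj (Finset.notMem_empty j)
    | succ n ih =>
      intro j hj
      rcases hRstep ω n with h | ⟨m, hm, h⟩
      · rw [h] at hj ⊢
        exact ih j hj
      · rw [h] at hj ⊢
        rcases Finset.mem_union.mp hj with hj | hj
        · obtain ⟨h1, h2⟩ := ih j hj
          exact ⟨h1, fun j' hj' => Finset.mem_union_left _ (h2 j' hj')⟩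
        · obtain ⟨_, _, hB, hall⟩ := (hρ ω (R ω n) (A ω n) m j).mp hj
          exact ⟨⟨m, hm, hB⟩, fun j' hj' => Finset.mem_union_left _ (hall j' hj')⟩
  by_cases hex : ∃ j, θ ∈ Hyp j
  · -- pick the true hypothesis with minimal block index
    obtain ⟨j₀, hj₀⟩ := hex
    obtain ⟨j₁, hj₁, hmin⟩ := Finset.exists_min_image
      (Finset.univ.filter (fun j => θ ∈ Hyp j)) idx
      ⟨j₀, Finset.mem_filter.mpr ⟨Finset.mem_univ _, hj₀⟩⟩
    have hj₁T : θ ∈ Hyp j₁ := (Finset.mem_filter.mp hj₁).2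
    have hminlt : ∀ j, idx j < idx j₁ → θ ∉ Hyp j := by
      intro j hlt hT
      exact absurd (hmin j (Finset.mem_filter.mpr ⟨Finset.mem_univ _, hT⟩))
        (not_le.mpr hlt)
    have huniq : ∀ j, idx j = idx j₁ → θ ∈ Hyp j → j = j₁ :=
      fun j h1 h2 => hexc θ (idx j₁) hminlt j j₁ h1 rfl h2 hj₁T
    have hsub : {ω | ∃ j ∈ R ω k, θ ∈ Hyp j} ⊆ {ω | ∃ n ∈ N, B j₁ ≤ T ω n j₁} := by
      intro ω hω
      obtain ⟨j, hjR, hjT⟩ := hω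
      have hge : idx j₁ ≤ idx j :=
        hmin j (Finset.mem_filter.mpr ⟨Finset.mem_univ _, hjT⟩)
      rcases eq_or_lt_of_le hge with heq | hlt
      · have : j = j₁ := huniq j heq.symm hjT
        exact ((claim ω k j hjR).1).imp (fun m hm => by rwa [this] at hm)
      · have hj₁R : j₁ ∈ R ω k := (claim ω k j hjR).2 j₁ hlt
        exact (claim ω k j₁ hj₁R).1
    exact le_trans (measure_mono hsub) (herr j₁ θ hj₁T)
  · have : {ω | ∃ j ∈ R ω k, θ ∈ Hyp j} = ∅ := by
      ext ω
      simp only [Set.mem_setOf_eq, Set.mem_empty_iff_false, iff_false]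
      rintro ⟨j, _, hj⟩
      exact hex ⟨j, hj⟩
    rw [this]
    simp
end

section
/- Let H^{(1)}, ..., H^{(k)} be hypotheses (subsets of parameter spaces) and let H = {⋂_{j∈J} H^{(j)} : ∅ ≠ J ⊆ {1,...,k}} be the family of all intersection hypotheses. Define inductively H_i = {H = ⋂_{j∈J} H^{(j)} : |J| = k − i + 1, and H ∉ H_{i'} for any i' < i} for i = 1, ..., k. Then H₁, ..., H_k is a partition of H and it is sequentially exclusive: for each i, if every hypothesis in ⋃_{i'<i} H_{i'} is false under θ, then H_i contains at most one hypothesis true under θ. -/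
open Finset

/-- The blocks of the closed-testing partition: `closedBlocks k Hb i` consists
of all intersection hypotheses `⋂_{j ∈ J} H^{(j)}` with `|J| = k − i + 1`
that do not already belong to an earlier block. -/
def closedBlocks {Θ : Type*} (k : ℕ) (Hb : Fin k → Set Θ) : ℕ → Set (Set Θ)
  | i => {S | (∃ J : Finset (Fin k), J.card = k - i + 1 ∧ S = ⋂ j ∈ J, Hb j) ∧
      ∀ i' < i, S ∉ closedBlocks k Hb i'}

lemma mem_closedBlocks {Θ : Type*} {k : ℕ} {Hb : Fin k → Set Θ} {S : Set Θ} {i : ℕ} :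
    S ∈ closedBlocks k Hb i ↔
      (∃ J : Finset (Fin k), J.card = k - i + 1 ∧ S = ⋂ j ∈ J, Hb j) ∧
      ∀ i' < i, S ∉ closedBlocks k Hb i' := by
  rw [closedBlocks]; rfl

/-- If `S` has a representation at level `i`, then it belongs to some block `i₀ ≤ i`. -/
lemma mem_some_block {Θ : Type*} {k : ℕ} {Hb : Fin k → Set Θ} {S : Set Θ} {i : ℕ}
    (h : ∃ J : Finset (Fin k), J.card = k - i + 1 ∧ S = ⋂ j ∈ J, Hb j) :
    ∃ i₀ ≤ i, S ∈ closedBlocks k Hb i₀ := by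
  by_cases h' : ∃ i' < i, S ∈ closedBlocks k Hb i'
  · obtain ⟨i', hi', hm⟩ := h'
    exact ⟨i', hi'.le, hm⟩
  · push_neg at h'
    exact ⟨i, le_refl i, mem_closedBlocks.mpr ⟨h, h'⟩⟩

/-- Membership in a block forces `1 ≤ i`. -/
lemma one_le_of_mem_block {Θ : Type*} {k : ℕ} {Hb : Fin k → Set Θ} {S : Set Θ} {i : ℕ}
    (h : S ∈ closedBlocks k Hb i) : 1 ≤ i := by
  obtain ⟨⟨J, hJ, -⟩, -⟩ := mem_closedBlocks.mp h
  have hle : J.card ≤ k := by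
    simpa using Finset.card_le_card (Finset.subset_univ J)
  omega

/-- The closed-testing blocks `H_1, ..., H_k` form a partition of the family of
all (nonempty-index) intersection hypotheses, and this partition is
sequentially exclusive: if every hypothesis in the earlier blocks is false
under `θ`, then block `i` contains at most one hypothesis true under `θ`. -/
theorem closed_testing_partition_sequentially_exclusive
    {Θ : Type*} (k : ℕ) (hk : 1 ≤ k) (Hb : Fin k → Set Θ) :
    (∀ i i', 1 ≤ i → i ≤ k → 1 ≤ i' → i' ≤ k → i ≠ i' →
      Disjoint (closedBlocks k Hb i) (closedBlocks k Hb i')) ∧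
    (⋃ i ∈ Set.Icc 1 k, closedBlocks k Hb i) =
      {S | ∃ J : Finset (Fin k), J.Nonempty ∧ S = ⋂ j ∈ J, Hb j} ∧
    (∀ (θ : Θ) (i : ℕ), (∀ i' < i, ∀ S ∈ closedBlocks k Hb i', θ ∉ S) →
      ∀ S ∈ closedBlocks k Hb i, ∀ S' ∈ closedBlocks k Hb i,
        θ ∈ S → θ ∈ S' → S = S') := by
  refine ⟨?_, ?_, ?_⟩
  · -- disjointness
    intro i i' _ _ _ _ hne
    rcases lt_or_gt_of_ne hne with h | h
    · rw [Set.disjoint_right]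
      intro S hS' hS
      exact (mem_closedBlocks.mp hS').2 i h hS
    · rw [Set.disjoint_left]
      intro S hS hS'
      exact (mem_closedBlocks.mp hS).2 i' h hS'
  · -- union
    ext S
    simp only [Set.mem_iUnion, Set.mem_setOf_eq, Set.mem_Icc, exists_prop]
    constructor
    · rintro ⟨i, ⟨h1, h2⟩, hS⟩
      obtain ⟨⟨J, hJ, hrep⟩, -⟩ := mem_closedBlocks.mp hS
      exact ⟨J, Finset.card_pos.mp (by omega), hrep⟩
    · rintro ⟨J, hJne, hrep⟩
      have hc1 : 1 ≤ J.card := Finset.card_pos.mpr hJne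
      have hc2 : J.card ≤ k := by
        simpa using Finset.card_le_card (Finset.subset_univ J)
      obtain ⟨i₀, hi₀le, hmem⟩ :=
        mem_some_block (S := S) (i := k - J.card + 1) ⟨J, by omega, hrep⟩
      have h1 := one_le_of_mem_block hmem
      exact ⟨i₀, ⟨h1, by omega⟩, hmem⟩
  · -- sequential exclusivity
    intro θ i hfalse S hS S' hS' hθS hθS'
    obtain ⟨⟨J, hJ, hrep⟩, -⟩ := mem_closedBlocks.mp hS
    obtain ⟨⟨J', hJ', hrep'⟩, -⟩ := mem_closedBlocks.mp hS'
    by_cases hJJ : J = J'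
    · rw [hrep, hrep', hJJ]
    · exfalso
      set U := J ∪ J' with hU
      have hsub : J ⊆ U := Finset.subset_union_left
      have hsub' : J' ⊆ U := Finset.subset_union_right
      have hcard : U.card > k - i + 1 := by
        rcases lt_or_eq_of_le (Finset.card_le_card hsub) with h | h
        · omega
        · exfalso
          have hJU : J = U := Finset.eq_of_subset_of_card_le hsub (by omega)
          have hJ'U : J' = U := Finset.eq_of_subset_of_card_le hsub' (by omega)
          exact hJJ (hJU.trans hJ'U.symm)
      have hUk : U.card ≤ k := by
        simpa using Finset.card_le_card (Finset.subset_univ U)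
      -- θ lies in the intersection over U
      have hθU : θ ∈ ⋂ j ∈ U, Hb j := by
        rw [Set.mem_iInter₂]
        intro j hj
        rcases Finset.mem_union.mp hj with hj | hj
        · have := hrep ▸ hθS
          exact Set.mem_iInter₂.mp this j hj
        · have := hrep' ▸ hθS'
          exact Set.mem_iInter₂.mp this j hj
      obtain ⟨i₀, hi₀le, hmem⟩ :=
        mem_some_block (S := ⋂ j ∈ U, Hb j) (i := k - U.card + 1) ⟨U, by omega, rfl⟩
      have hi₀lt : i₀ < i := by omega
      exact hfalse i₀ hi₀lt _ hmem hθU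
end

section
/- Suppose for each j and s, P_{θ^{(j)}}(T_n^{(j)} ≥ B_s^{(j)} for some n, with T_{n'}^{(j)} > A₁^{(j)} for all n' < n) ≤ α/(k − s + 1) for θ^{(j)} ∈ H^{(j)}, and symmetrically P_{θ^{(j)}}(T_n^{(j)} ≤ A_s^{(j)} for some n, with T_{n'}^{(j)} < B₁^{(j)} for all n' < n) ≤ β/(k − s + 1) for θ^{(j)} ∈ G^{(j)}. Define the acceptance function ρ̃(R, A, n) = {H^{(j)} ∉ R ∪ A : T̃_n^{(j)} ≤ −(k − |A|)}. Then ρ̃ satisfies the monotonicity condition with the roles of R and A swapped: for A ⊆ A' and R disjoint from A, ρ̃(R, A, n) ⊆ ρ̃(∅, A', n) ∪ A'. -/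
open MeasureTheory Finset
open scoped ENNReal

/-- For the Bartroff–Song procedure controlling both type I and type II FWERs:
under the marginal type I and II error conditions, the acceptance function
`ρ̃(R,A,n) = {j ∉ R ∪ A : T̃_n^{(j)} ≤ −(k − |A|)}` satisfies the monotonicity
condition with the roles of rejected and accepted sets swapped:
for `A ⊆ A'` and `R` disjoint from `A`, `ρ̃(R,A,n) ⊆ ρ̃(∅,A',n) ∪ A'`. -/
theorem acceptance_function_monotone
    {Ω ϑ ι : Type*} [MeasurableSpace Ω] [Fintype ι] [DecidableEq ι]
    (P : ϑ → Measure Ω) [∀ θ, IsProbabilityMeasure (P θ)]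
    (HypH HypG : ι → Set ϑ) (α β : ℝ≥0∞)
    (T Tt : Ω → ℕ → ι → ℝ) (Acrit Bcrit : ι → ℕ → ℝ)
    (k : ℕ) (hk : k = Fintype.card ι)
    (hI : ∀ j θ, θ ∈ HypH j → ∀ s, 1 ≤ s → s ≤ k →
      P θ {ω | ∃ n, Bcrit j s ≤ T ω n j ∧ ∀ n' < n, Acrit j 1 < T ω n' j} ≤
        α / ((k - s + 1 : ℕ) : ℝ≥0∞))
    (hII : ∀ j θ, θ ∈ HypG j → ∀ s, 1 ≤ s → s ≤ k →
      P θ {ω | ∃ n, T ω n j ≤ Acrit j s ∧ ∀ n' < n, T ω n' j < Bcrit j 1} ≤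
        β / ((k - s + 1 : ℕ) : ℝ≥0∞))
    (ρt : Ω → Finset ι → Finset ι → ℕ → Finset ι)
    (hρt : ∀ ω R A n j, j ∈ ρt ω R A n ↔
      j ∉ R ∧ j ∉ A ∧ Tt ω n j ≤ -((k : ℝ) - A.card)) :
    ∀ (ω : Ω) (R A A' : Finset ι) (n : ℕ), A ⊆ A' → Disjoint R A →
      ρt ω R A n ⊆ ρt ω ∅ A' n ∪ A' := by
  intro ω R A A' n hAA' _ j hj
  rw [Finset.mem_union]
  by_cases hjA' : j ∈ A'
  · exact Or.inr hjA'
  · refine Or.inl ?_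
    obtain ⟨_, _, hT⟩ := (hρt ω R A n j).mp hj
    refine (hρt ω ∅ A' n j).mpr ⟨Finset.notMem_empty j, hjA', hT.trans ?_⟩
    have h := Finset.card_le_card hAA'
    have : (A.card : ℝ) ≤ A'.card := Nat.cast_le.mpr h
    simp only [neg_sub]
    linarith
end
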